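/- Let H be a smooth affine group scheme over Spec(W(k)), closed in GL(O) for O a free W(k)-module of finite rank. If l ∈ ℕ and z ∈ Lie(H), then the reduction modulo p^{2l} of 1_O + p^l·z belongs to H(W_{2l}(k)), i.e. the image of H(W(k)) → GL(O)(W_{2l}(k)) contains 1_O + p^l·z mod p^{2l}. -/

import Mathlib

noncomputable section

/-- A closed subgroup scheme `H` of `GL_O` (with `O` free of rank `r`) over `W(k)`, given by
its functor of points: for every commutative `W(k)`-algebra `S`, a subgroup `H(S)` of
`GL_r(S)`, cut out by polynomial equations in the matrix entries of `g` and `g⁻¹`. -/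
structure ClosedSubgroupGL (p : ℕ) [Fact p.Prime] (k : Type) [CommRing k] (r : ℕ) where
  pts : ∀ (S : Type) [CommRing S] [Algebra (WittVector p k) S],
    Set ((Matrix (Fin r) (Fin r) S)ˣ)
  closed : ∃ T : Set (MvPolynomial ((Fin r × Fin r) ⊕ (Fin r × Fin r)) (WittVector p k)),
    ∀ (S : Type) [CommRing S] [Algebra (WittVector p k) S],
      ∀ g : (Matrix (Fin r) (Fin r) S)ˣ,
        g ∈ pts S ↔ ∀ f ∈ T,
          MvPolynomial.aeval
            (Sum.elim (fun ij : Fin r × Fin r => (g : Matrix (Fin r) (Fin r) S) ij.1 ij.2)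
              (fun ij : Fin r × Fin r =>
                ((g⁻¹ : (Matrix (Fin r) (Fin r) S)ˣ) : Matrix (Fin r) (Fin r) S) ij.1 ij.2))
            f = 0
  one_mem : ∀ (S : Type) [CommRing S] [Algebra (WittVector p k) S], 1 ∈ pts S
  mul_mem : ∀ (S : Type) [CommRing S] [Algebra (WittVector p k) S],
    ∀ g h : (Matrix (Fin r) (Fin r) S)ˣ, g ∈ pts S → h ∈ pts S → g * h ∈ pts S
  inv_mem : ∀ (S : Type) [CommRing S] [Algebra (WittVector p k) S],
    ∀ g : (Matrix (Fin r) (Fin r) S)ˣ, g ∈ pts S → g⁻¹ ∈ pts S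

/-- `H` is smooth over `Spec W(k)`: it is formally smooth, i.e. points lift through
square-zero extensions. -/
def IsSmoothGS (p : ℕ) [Fact p.Prime] (k : Type) [CommRing k] (r : ℕ)
    (H : ClosedSubgroupGL p k r) : Prop :=
  ∀ (S : Type) [CommRing S] [Algebra (WittVector p k) S] (J : Ideal S), J ^ 2 = ⊥ →
    ∀ h ∈ H.pts (S ⧸ J), ∃ g ∈ H.pts S,
      Units.map (RingHom.toMonoidHom ((Ideal.Quotient.mk J).mapMatrix)) g = h

/-- `Lie(H) ⊆ End(O)`: the matrices `z` with `1 + ε z ∈ H(W(k)[ε])`. -/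
def LieGS (p : ℕ) [Fact p.Prime] (k : Type) [CommRing k] (r : ℕ)
    (H : ClosedSubgroupGL p k r) : Set (Matrix (Fin r) (Fin r) (WittVector p k)) :=
  {z | ∃ u : (Matrix (Fin r) (Fin r) (DualNumber (WittVector p k)))ˣ,
    (u : Matrix (Fin r) (Fin r) (DualNumber (WittVector p k))) =
      1 + (DualNumber.eps : DualNumber (WittVector p k)) •
        (z.map (algebraMap (WittVector p k) (DualNumber (WittVector p k)))) ∧
    u ∈ H.pts (DualNumber (WittVector p k))}



namespace Stmt3Aux

section Witt

variable {p : ℕ} [hp : Fact p.Prime] {k : Type} [Field k] [CharP k p] [PerfectRing k p]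

omit [PerfectRing k p] in
theorem coeff_mul_p_pow (c : WittVector p k) (n i : ℕ) (hi : i < n) :
    (c * (p : WittVector p k) ^ n).coeff i = 0 := by
  induction n generalizing c i with
  | zero => omega
  | succ n ih =>
    rw [pow_succ, ← mul_assoc]
    cases i with
    | zero => exact WittVector.mul_charP_coeff_zero _
    | succ i =>
      rw [WittVector.mul_charP_coeff_succ, ih c i (by omega), zero_pow hp.out.ne_zero]

theorem mem_span_p_pow (x : WittVector p k) (n : ℕ) :
    x ∈ Ideal.span {(p : WittVector p k) ^ n} ↔ ∀ i < n, x.coeff i = 0 := by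
  constructor
  · intro hx i hi
    obtain ⟨c, hc⟩ := Ideal.mem_span_singleton.mp hx
    rw [hc, mul_comm]
    exact coeff_mul_p_pow c n i hi
  · induction n generalizing x with
    | zero =>
      intro _
      simpa using Ideal.mem_span_singleton.mpr (one_dvd x)
    | succ n ih =>
      intro hx
      have h0 : x.coeff 0 = 0 := hx 0 (by omega)
      set y := WittVector.mk p (fun i => x.coeff (i + 1)) with hy
      set c := (WittVector.frobeniusEquiv p k).symm y with hc
      have hfc : WittVector.frobenius c = y := by
        exact (WittVector.frobeniusEquiv p k).apply_symm_apply y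
      have hx' : x = c * p := by
        rw [← WittVector.verschiebung_frobenius, hfc]
        ext i
        cases i with
        | zero => rw [WittVector.verschiebung_coeff_zero]; exact h0
        | succ i =>
          rw [WittVector.verschiebung_coeff_succ, hy, WittVector.coeff_mk]
      have hcc : ∀ i < n, c.coeff i = 0 := by
        intro i hi
        have h1 : c.coeff i ^ p = x.coeff (i + 1) := by
          rw [← WittVector.coeff_frobenius_charP, hfc, hy, WittVector.coeff_mk]
        have h2 : c.coeff i ^ p = 0 := by rw [h1]; exact hx (i + 1) (by omega)
        exact pow_eq_zero_iff hp.out.ne_zero |>.mp h2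
      obtain ⟨d, hd⟩ := Ideal.mem_span_singleton.mp (ih c hcc)
      refine Ideal.mem_span_singleton.mpr ⟨d, ?_⟩
      rw [hx', hd, pow_succ]
      ring

theorem sub_mem_span_iff (x y : WittVector p k) (n : ℕ) :
    x - y ∈ Ideal.span {(p : WittVector p k) ^ n} ↔ ∀ i < n, x.coeff i = y.coeff i := by
  rw [mem_span_p_pow]
  constructor
  · intro h i hi
    have h1 : WittVector.truncate n (x - y) = 0 := by
      rw [← RingHom.mem_ker, WittVector.mem_ker_truncate]
      exact h
    have h2 : WittVector.truncate n x = WittVector.truncate n y := by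
      rwa [map_sub, sub_eq_zero] at h1
    have h3 := congrArg (fun t => TruncatedWittVector.coeff ⟨i, hi⟩ t) h2
    simpa [WittVector.coeff_truncate] using h3
  · intro h
    have h2 : WittVector.truncate n x = WittVector.truncate n y := by
      ext i
      rw [WittVector.coeff_truncate, WittVector.coeff_truncate]
      exact h i i.2
    have h3 : WittVector.truncate n (x - y) = 0 := by rw [map_sub, h2, sub_self]
    rw [← RingHom.mem_ker, WittVector.mem_ker_truncate] at h3
    exact h3

theorem witt_eq_of_sub_mem (x y : WittVector p k)
    (h : ∀ n : ℕ, x - y ∈ Ideal.span {(p : WittVector p k) ^ n}) : x = y := by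
  ext i
  exact (sub_mem_span_iff x y (i + 1)).mp (h (i + 1)) i (Nat.lt_succ_self i)

end Witt

section Grp

variable {p : ℕ} [hp : Fact p.Prime] {k : Type} [CommRing k] {r : ℕ}

theorem map_unit_apply {S S' : Type} [CommRing S] [CommRing S'] (φ : S →+* S')
    (g : (Matrix (Fin r) (Fin r) S)ˣ) (i j : Fin r) :
    ((Units.map (RingHom.toMonoidHom φ.mapMatrix) g : (Matrix (Fin r) (Fin r) S')ˣ) :
      Matrix (Fin r) (Fin r) S') i j = φ ((g : Matrix (Fin r) (Fin r) S) i j) := by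
  simp [RingHom.mapMatrix_apply, Matrix.map_apply]

theorem map_unit_inv_apply {S S' : Type} [CommRing S] [CommRing S'] (φ : S →+* S')
    (g : (Matrix (Fin r) (Fin r) S)ˣ) (i j : Fin r) :
    (((Units.map (RingHom.toMonoidHom φ.mapMatrix) g)⁻¹ : (Matrix (Fin r) (Fin r) S')ˣ) :
      Matrix (Fin r) (Fin r) S') i j
      = φ (((g⁻¹ : (Matrix (Fin r) (Fin r) S)ˣ) : Matrix (Fin r) (Fin r) S) i j) := by
  rw [← map_inv]
  exact map_unit_apply φ g⁻¹ i j

theorem entry_eq_of_map_eq {S S' : Type} [CommRing S] [CommRing S'] (φ : S →+* S')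
    {g : (Matrix (Fin r) (Fin r) S)ˣ} {v : (Matrix (Fin r) (Fin r) S')ˣ}
    (h : Units.map (RingHom.toMonoidHom φ.mapMatrix) g = v) (i j : Fin r) :
    φ ((g : Matrix (Fin r) (Fin r) S) i j) = (v : Matrix (Fin r) (Fin r) S') i j := by
  have h2 := congrArg
    (fun t : (Matrix (Fin r) (Fin r) S')ˣ => (t : Matrix (Fin r) (Fin r) S') i j) h
  simpa [map_unit_apply] using h2

theorem mem_pts_map (H : ClosedSubgroupGL p k r) {S S' : Type}
    [CommRing S] [Algebra (WittVector p k) S] [CommRing S'] [Algebra (WittVector p k) S']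
    (φ : S →ₐ[WittVector p k] S') (g : (Matrix (Fin r) (Fin r) S)ˣ) (hg : g ∈ H.pts S) :
    Units.map (RingHom.toMonoidHom (φ.toRingHom.mapMatrix)) g ∈ H.pts S' := by
  obtain ⟨T, hT⟩ := H.closed
  rw [hT] at hg ⊢
  intro f hf
  have key := congrArg φ (hg f hf)
  rw [map_zero, MvPolynomial.comp_aeval_apply] at key
  have harg : (Sum.elim
      (fun ij : Fin r × Fin r =>
        ((Units.map (RingHom.toMonoidHom (φ.toRingHom.mapMatrix)) g :
          (Matrix (Fin r) (Fin r) S')ˣ) : Matrix (Fin r) (Fin r) S') ij.1 ij.2)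
      (fun ij : Fin r × Fin r =>
        (((Units.map (RingHom.toMonoidHom (φ.toRingHom.mapMatrix)) g)⁻¹ :
          (Matrix (Fin r) (Fin r) S')ˣ) : Matrix (Fin r) (Fin r) S') ij.1 ij.2))
      = fun i => φ (Sum.elim
          (fun ij : Fin r × Fin r => (g : Matrix (Fin r) (Fin r) S) ij.1 ij.2)
          (fun ij : Fin r × Fin r =>
            ((g⁻¹ : (Matrix (Fin r) (Fin r) S)ˣ) : Matrix (Fin r) (Fin r) S) ij.1 ij.2) i) := by
    funext x
    cases x with
    | inl ij => exact map_unit_apply φ.toRingHom g ij.1 ij.2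
    | inr ij => exact map_unit_inv_apply φ.toRingHom g ij.1 ij.2
  rw [harg]
  exact key

theorem span_p_le {n m : ℕ} (h : n ≤ m) :
    Ideal.span {(p : WittVector p k) ^ m} ≤ Ideal.span {(p : WittVector p k) ^ n} :=
  Ideal.span_singleton_le_span_singleton.mpr (pow_dvd_pow _ h)

/-- `R ⧸ I0  →  (R ⧸ I1) ⧸ (I0/I1)` as an `R`-algebra map. -/
def dqAlgHom {R : Type} [CommRing R] {I1 I0 : Ideal R} (hle : I1 ≤ I0) :
    (R ⧸ I0) →ₐ[R] ((R ⧸ I1) ⧸ I0.map (Ideal.Quotient.mk I1)) :=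
  { toRingHom := ((DoubleQuot.quotQuotEquivQuotOfLE hle).symm :
      (R ⧸ I0) →+* ((R ⧸ I1) ⧸ I0.map (Ideal.Quotient.mk I1)))
    commutes' := fun x => by
      show (DoubleQuot.quotQuotEquivQuotOfLE hle).symm (algebraMap R (R ⧸ I0) x) = _
      rw [Ideal.Quotient.algebraMap_eq, DoubleQuot.quotQuotEquivQuotOfLE_symm_mk]
      rfl }

theorem dq_apply_dqAlgHom {R : Type} [CommRing R] {I1 I0 : Ideal R} (hle : I1 ≤ I0)
    (y : R ⧸ I0) : DoubleQuot.quotQuotEquivQuotOfLE hle (dqAlgHom hle y) = y :=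
  (DoubleQuot.quotQuotEquivQuotOfLE hle).apply_symm_apply y

theorem lift_step (H : ClosedSubgroupGL p k r) (hs : IsSmoothGS p k r H) (m : ℕ) (hm : 2 ≤ m)
    (u : (Matrix (Fin r) (Fin r)
      (WittVector p k ⧸ Ideal.span {(p : WittVector p k) ^ m}))ˣ)
    (hu : u ∈ H.pts (WittVector p k ⧸ Ideal.span {(p : WittVector p k) ^ m})) :
    ∃ v : (Matrix (Fin r) (Fin r)
      (WittVector p k ⧸ Ideal.span {(p : WittVector p k) ^ (m + 1)}))ˣ,
      v ∈ H.pts (WittVector p k ⧸ Ideal.span {(p : WittVector p k) ^ (m + 1)}) ∧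
      Units.map (RingHom.toMonoidHom
        ((Ideal.Quotient.factor (span_p_le (Nat.le_succ m))).mapMatrix)) v = u := by
  have hle : Ideal.span {(p : WittVector p k) ^ (m + 1)} ≤
      Ideal.span {(p : WittVector p k) ^ m} := span_p_le (Nat.le_succ m)
  have hJ2 : ((Ideal.span {(p : WittVector p k) ^ m}).map
      (Ideal.Quotient.mk (Ideal.span {(p : WittVector p k) ^ (m + 1)}))) ^ 2 = ⊥ := by
    rw [Ideal.map_span, Set.image_singleton, Ideal.span_singleton_pow,
      Ideal.span_singleton_eq_bot, ← map_pow, Ideal.Quotient.eq_zero_iff_mem, ← pow_mul]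
    exact Ideal.mem_span_singleton.mpr (pow_dvd_pow _ (by omega))
  have hψu := mem_pts_map H (dqAlgHom hle) u hu
  obtain ⟨g, hg, hmap⟩ := hs _ _ hJ2 _ hψu
  refine ⟨g, hg, ?_⟩
  rw [Units.ext_iff]
  ext i j
  have h1 := entry_eq_of_map_eq _ hmap i j
  rw [map_unit_apply ((dqAlgHom hle).toRingHom) u i j] at h1
  obtain ⟨x, hx⟩ := Ideal.Quotient.mk_surjective
    ((g : Matrix (Fin r) (Fin r)
      (WittVector p k ⧸ Ideal.span {(p : WittVector p k) ^ (m + 1)})) i j)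
  have h2 : DoubleQuot.quotQuotEquivQuotOfLE hle
      ((Ideal.Quotient.mk _) ((g : Matrix (Fin r) (Fin r) _) i j))
      = (u : Matrix (Fin r) (Fin r) _) i j := by
    rw [h1]
    exact dq_apply_dqAlgHom hle _
  rw [← hx] at h2
  have h2' : Ideal.Quotient.mk (Ideal.span {(p : WittVector p k) ^ m}) x
      = (u : Matrix (Fin r) (Fin r) _) i j := by
    rw [← DoubleQuot.quotQuotEquivQuotOfLE_quotQuotMk x hle]
    exact h2
  rw [map_unit_apply, ← hx, Ideal.Quotient.factor_mk]
  exact h2'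

/-- The chain of lifted points over `W(k)/p^{2l+n}`. -/
noncomputable def chain (H : ClosedSubgroupGL p k r) (hs : IsSmoothGS p k r H)
    (l : ℕ) (hl : 1 ≤ l)
    (base : {v : (Matrix (Fin r) (Fin r)
        (WittVector p k ⧸ Ideal.span {(p : WittVector p k) ^ (2 * l + 0)}))ˣ //
      v ∈ H.pts (WittVector p k ⧸ Ideal.span {(p : WittVector p k) ^ (2 * l + 0)})}) :
    ∀ n : ℕ, {v : (Matrix (Fin r) (Fin r)
        (WittVector p k ⧸ Ideal.span {(p : WittVector p k) ^ (2 * l + n)}))ˣ //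
      v ∈ H.pts (WittVector p k ⧸ Ideal.span {(p : WittVector p k) ^ (2 * l + n)})}
  | 0 => base
  | n + 1 =>
    ⟨(lift_step H hs (2 * l + n) (by omega) (chain H hs l hl base n).1
        (chain H hs l hl base n).2).choose,
     (lift_step H hs (2 * l + n) (by omega) (chain H hs l hl base n).1
        (chain H hs l hl base n).2).choose_spec.1⟩

theorem chain_compat (H : ClosedSubgroupGL p k r) (hs : IsSmoothGS p k r H)
    (l : ℕ) (hl : 1 ≤ l)
    (base : {v : (Matrix (Fin r) (Fin r)
        (WittVector p k ⧸ Ideal.span {(p : WittVector p k) ^ (2 * l + 0)}))ˣ //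
      v ∈ H.pts (WittVector p k ⧸ Ideal.span {(p : WittVector p k) ^ (2 * l + 0)})})
    (n : ℕ) :
    Units.map (RingHom.toMonoidHom ((Ideal.Quotient.factor
        (S := Ideal.span {(p : WittVector p k) ^ (2 * l + (n + 1))})
        (T := Ideal.span {(p : WittVector p k) ^ (2 * l + n)})
        (span_p_le (by omega))).mapMatrix)) (chain H hs l hl base (n + 1)).1
      = (chain H hs l hl base n).1 :=
  (lift_step H hs (2 * l + n) (by omega) (chain H hs l hl base n).1
    (chain H hs l hl base n).2).choose_spec.2

/-- The algebra map `W(k)[ε] → W(k)/p^{2l}` sending `ε` to `p^l`. -/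
def baseHom (p : ℕ) [Fact p.Prime] (k : Type) [CommRing k] (l : ℕ) :
    DualNumber (WittVector p k) →ₐ[WittVector p k]
      (WittVector p k ⧸ Ideal.span {(p : WittVector p k) ^ (2 * l)}) :=
  DualNumber.lift ⟨(Algebra.ofId _ _,
      Ideal.Quotient.mk (Ideal.span {(p : WittVector p k) ^ (2 * l)})
        ((p : WittVector p k) ^ l)),
    by
      rw [← map_mul, ← pow_add, Ideal.Quotient.eq_zero_iff_mem]
      exact Ideal.mem_span_singleton.mpr (pow_dvd_pow _ (by omega)),
    fun a => Commute.all _ _⟩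

theorem baseHom_eps (p : ℕ) [Fact p.Prime] (k : Type) [CommRing k] (l : ℕ) :
    baseHom p k l DualNumber.eps =
      Ideal.Quotient.mk (Ideal.span {(p : WittVector p k) ^ (2 * l)})
        ((p : WittVector p k) ^ l) :=
  DualNumber.lift_apply_eps _

theorem baseHom_algebraMap (l : ℕ) (a : WittVector p k) :
    baseHom p k l (algebraMap (WittVector p k) (DualNumber (WittVector p k)) a)
      = Ideal.Quotient.mk (Ideal.span {(p : WittVector p k) ^ (2 * l)}) a := by
  rw [AlgHom.commutes, Ideal.Quotient.algebraMap_eq]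

theorem baseHom_entry {r : ℕ} (l : ℕ) (z : Matrix (Fin r) (Fin r) (WittVector p k))
    (i j : Fin r) :
    baseHom p k l ((1 + (DualNumber.eps : DualNumber (WittVector p k)) •
        (z.map (algebraMap (WittVector p k) (DualNumber (WittVector p k))))) i j)
      = Ideal.Quotient.mk (Ideal.span {(p : WittVector p k) ^ (2 * l)})
          ((1 + (p : WittVector p k) ^ l • z) i j) := by
  have h1 : baseHom p k l ((1 : Matrix (Fin r) (Fin r) (DualNumber (WittVector p k))) i j)
      = Ideal.Quotient.mk (Ideal.span {(p : WittVector p k) ^ (2 * l)})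
        ((1 : Matrix (Fin r) (Fin r) (WittVector p k)) i j) := by
    rw [Matrix.one_apply, Matrix.one_apply, apply_ite (baseHom p k l), map_one, map_zero,
      apply_ite (Ideal.Quotient.mk (Ideal.span {(p : WittVector p k) ^ (2 * l)})),
      map_one, map_zero]
  have h2 : baseHom p k l ((DualNumber.eps : DualNumber (WittVector p k)) *
        algebraMap (WittVector p k) (DualNumber (WittVector p k)) (z i j))
      = Ideal.Quotient.mk (Ideal.span {(p : WittVector p k) ^ (2 * l)})
        ((p : WittVector p k) ^ l * z i j) := by
    rw [map_mul, baseHom_eps, baseHom_algebraMap, map_mul]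
  rw [Matrix.add_apply, Matrix.add_apply, Matrix.smul_apply, Matrix.smul_apply,
    Matrix.map_apply, smul_eq_mul, smul_eq_mul, map_add, map_add, h1, h2]

/-- Entrywise limit of a sequence of matrices of Witt vectors. -/
def limitMatrix {r : ℕ} (A : ℕ → Matrix (Fin r) (Fin r) (WittVector p k)) :
    Matrix (Fin r) (Fin r) (WittVector p k) :=
  Matrix.of fun i j => WittVector.mk p fun m => (A m i j).coeff m

end Grp

section Limit

variable {p : ℕ} [hp : Fact p.Prime] {k : Type} [Field k] [CharP k p] [PerfectRing k p] {r : ℕ}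

theorem limit_spec (b : ℕ) (hb : 1 ≤ b) (A : ℕ → Matrix (Fin r) (Fin r) (WittVector p k))
    (hstep : ∀ n (i j : Fin r),
      A (n + 1) i j - A n i j ∈ Ideal.span {(p : WittVector p k) ^ (b + n)}) :
    ∀ n (i j : Fin r),
      limitMatrix A i j - A n i j ∈ Ideal.span {(p : WittVector p k) ^ (b + n)} := by
  have hcong : ∀ n m, n ≤ m → ∀ (i j : Fin r) i0, i0 < b + n →
      (A m i j).coeff i0 = (A n i j).coeff i0 := by
    intro n m hnm
    induction m, hnm using Nat.le_induction with
    | base => intro i j i0 _; rfl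
    | succ m hnm ih =>
      intro i j i0 hi0
      rw [(sub_mem_span_iff (A (m + 1) i j) (A m i j) (b + m)).mp (hstep m i j) i0
        (by omega)]
      exact ih i j i0 hi0
  intro n i j
  rw [sub_mem_span_iff]
  intro i0 hi0
  have hlim : (limitMatrix A i j).coeff i0 = (A i0 i j).coeff i0 := by
    simp [limitMatrix, WittVector.coeff_mk]
  rw [hlim]
  rcases le_total n i0 with h | h
  · exact hcong n i0 h i j i0 hi0
  · exact (hcong i0 n h i j i0 (by omega)).symm

end Limit

end Stmt3Aux

set_option maxHeartbeats 2000000 in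
/-- Let `H` be a smooth affine group scheme over `Spec W(k)`, closed in `GL(O)`
for `O` free of finite rank.  If `l ∈ ℕ` and `z ∈ Lie(H)`, then the reduction of
`1_O + p^l z` modulo `p^{2l}` belongs to `H(W_{2l}(k))`: the image of `H(W(k))` in
`GL(O)(W_{2l}(k))` contains `1_O + p^l z mod p^{2l}`, i.e. there are `h ∈ H(W(k))` and `w`
with `h = 1 + p^l z + p^{2l} w`. -/
theorem stmt3 (p : ℕ) [Fact p.Prime] (k : Type) [Field k] [CharP k p] [PerfectRing k p]
    (r : ℕ) (H : ClosedSubgroupGL p k r) (hsmooth : IsSmoothGS p k r H)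
    (l : ℕ) (hl : 1 ≤ l)
    (z : Matrix (Fin r) (Fin r) (WittVector p k)) (hz : z ∈ LieGS p k r H) :
    ∃ h : (Matrix (Fin r) (Fin r) (WittVector p k))ˣ, h ∈ H.pts (WittVector p k) ∧
      ∃ w : Matrix (Fin r) (Fin r) (WittVector p k),
        (h : Matrix (Fin r) (Fin r) (WittVector p k)) =
          1 + ((p : WittVector p k) ^ l) • z + ((p : WittVector p k) ^ (2 * l)) • w := by
  classical
  obtain ⟨u, huval, humem⟩ := hz
  -- the base point `1 + p^l z` over `W(k)/p^{2l}`
  have hc0mem := Stmt3Aux.mem_pts_map H (Stmt3Aux.baseHom p k l) u humem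
  set c0 := Units.map (RingHom.toMonoidHom ((Stmt3Aux.baseHom p k l).toRingHom.mapMatrix)) u
    with hc0def
  have hc0val : ∀ i j : Fin r,
      (c0 : Matrix (Fin r) (Fin r)
        (WittVector p k ⧸ Ideal.span {(p : WittVector p k) ^ (2 * l)})) i j =
      Ideal.Quotient.mk (Ideal.span {(p : WittVector p k) ^ (2 * l)})
        ((1 + (p : WittVector p k) ^ l • z) i j) := by
    intro i j
    rw [hc0def, Stmt3Aux.map_unit_apply, huval]
    exact Stmt3Aux.baseHom_entry l z i j
  -- the compatible chain of points over `W(k)/p^{2l+n}`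
  let c := Stmt3Aux.chain H hsmooth l hl ⟨c0, hc0mem⟩
  have hcompat : ∀ n : ℕ, Units.map (RingHom.toMonoidHom
      ((Ideal.Quotient.factor
        (S := Ideal.span {(p : WittVector p k) ^ (2 * l + (n + 1))})
        (T := Ideal.span {(p : WittVector p k) ^ (2 * l + n)})
        (Stmt3Aux.span_p_le (by omega))).mapMatrix)) (c (n + 1)).1
      = (c n).1 := fun n => Stmt3Aux.chain_compat H hsmooth l hl ⟨c0, hc0mem⟩ n
  have hcompatInv : ∀ n : ℕ, Units.map (RingHom.toMonoidHom
      ((Ideal.Quotient.factor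
        (S := Ideal.span {(p : WittVector p k) ^ (2 * l + (n + 1))})
        (T := Ideal.span {(p : WittVector p k) ^ (2 * l + n)})
        (Stmt3Aux.span_p_le (by omega))).mapMatrix)) ((c (n + 1)).1)⁻¹
      = ((c n).1)⁻¹ := by
    intro n
    rw [map_inv, hcompat n]
  -- choose entrywise lifts of the chain and of the inverses of the chain
  have hAex : ∀ n : ℕ, ∃ A : Matrix (Fin r) (Fin r) (WittVector p k),
      ∀ i j : Fin r, Ideal.Quotient.mk (Ideal.span {(p : WittVector p k) ^ (2 * l + n)})
        (A i j) = ((c n).1 : Matrix (Fin r) (Fin r) (WittVector p k ⧸ Ideal.span {(p : WittVector p k) ^ (2 * l + n)})) i j := by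
    intro n
    refine ⟨Matrix.of fun i j => (Ideal.Quotient.mk_surjective
      (((c n).1 : Matrix (Fin r) (Fin r) (WittVector p k ⧸ Ideal.span {(p : WittVector p k) ^ (2 * l + n)})) i j)).choose, fun i j => ?_⟩
    exact (Ideal.Quotient.mk_surjective _).choose_spec
  choose A hA using hAex
  have hBex : ∀ n : ℕ, ∃ B : Matrix (Fin r) (Fin r) (WittVector p k),
      ∀ i j : Fin r, Ideal.Quotient.mk (Ideal.span {(p : WittVector p k) ^ (2 * l + n)})
        (B i j) = (((c n).1⁻¹ : (Matrix (Fin r) (Fin r) (WittVector p k ⧸ Ideal.span {(p : WittVector p k) ^ (2 * l + n)}))ˣ) :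
          Matrix (Fin r) (Fin r) (WittVector p k ⧸ Ideal.span {(p : WittVector p k) ^ (2 * l + n)})) i j := by
    intro n
    refine ⟨Matrix.of fun i j => (Ideal.Quotient.mk_surjective
      ((((c n).1⁻¹ : (Matrix (Fin r) (Fin r) (WittVector p k ⧸ Ideal.span {(p : WittVector p k) ^ (2 * l + n)}))ˣ) :
        Matrix (Fin r) (Fin r) (WittVector p k ⧸ Ideal.span {(p : WittVector p k) ^ (2 * l + n)})) i j)).choose, fun i j => ?_⟩
    exact (Ideal.Quotient.mk_surjective _).choose_spec
  choose B hB using hBex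
  -- consecutive lifts are congruent
  have hstepA : ∀ n (i j : Fin r), A (n + 1) i j - A n i j ∈
      Ideal.span {(p : WittVector p k) ^ (2 * l + n)} := by
    intro n i j
    have h1 := Stmt3Aux.entry_eq_of_map_eq _ (hcompat n) i j
    rw [← hA (n + 1) i j, Ideal.Quotient.factor_mk, ← hA n i j] at h1
    exact Ideal.Quotient.eq.mp h1
  have hstepB : ∀ n (i j : Fin r), B (n + 1) i j - B n i j ∈
      Ideal.span {(p : WittVector p k) ^ (2 * l + n)} := by
    intro n i j
    have h1 := Stmt3Aux.entry_eq_of_map_eq _ (hcompatInv n) i j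
    rw [← hB (n + 1) i j, Ideal.Quotient.factor_mk, ← hB n i j] at h1
    exact Ideal.Quotient.eq.mp h1
  have hlimA := Stmt3Aux.limit_spec (2 * l) (by omega) A hstepA
  have hlimB := Stmt3Aux.limit_spec (2 * l) (by omega) B hstepB
  have hMred : ∀ n (i j : Fin r),
      Ideal.Quotient.mk (Ideal.span {(p : WittVector p k) ^ (2 * l + n)})
        (Stmt3Aux.limitMatrix A i j) = ((c n).1 : Matrix (Fin r) (Fin r) (WittVector p k ⧸ Ideal.span {(p : WittVector p k) ^ (2 * l + n)})) i j := by
    intro n i j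
    rw [← hA n i j]
    exact Ideal.Quotient.eq.mpr (hlimA n i j)
  have hNred : ∀ n (i j : Fin r),
      Ideal.Quotient.mk (Ideal.span {(p : WittVector p k) ^ (2 * l + n)})
        (Stmt3Aux.limitMatrix B i j) = (((c n).1⁻¹ : (Matrix (Fin r) (Fin r) (WittVector p k ⧸ Ideal.span {(p : WittVector p k) ^ (2 * l + n)}))ˣ) :
          Matrix (Fin r) (Fin r) (WittVector p k ⧸ Ideal.span {(p : WittVector p k) ^ (2 * l + n)})) i j := by
    intro n i j
    rw [← hB n i j]
    exact Ideal.Quotient.eq.mpr (hlimB n i j)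
  -- separatedness
  have hsep : ∀ x y : WittVector p k,
      (∀ n : ℕ, x - y ∈ Ideal.span {(p : WittVector p k) ^ (2 * l + n)}) → x = y := by
    intro x y hxy
    apply Stmt3Aux.witt_eq_of_sub_mem
    intro n
    exact Stmt3Aux.span_p_le (by omega) (hxy n)
  -- the two limits are inverse to each other
  have hmapA : ∀ n : ℕ,
      (Ideal.Quotient.mk (Ideal.span {(p : WittVector p k) ^ (2 * l + n)})).mapMatrix
        (Stmt3Aux.limitMatrix A) = ((c n).1 : Matrix (Fin r) (Fin r) (WittVector p k ⧸ Ideal.span {(p : WittVector p k) ^ (2 * l + n)})) := by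
    intro n
    ext i j
    rw [RingHom.mapMatrix_apply, Matrix.map_apply]
    exact hMred n i j
  have hmapB : ∀ n : ℕ,
      (Ideal.Quotient.mk (Ideal.span {(p : WittVector p k) ^ (2 * l + n)})).mapMatrix
        (Stmt3Aux.limitMatrix B) = (((c n).1⁻¹ : (Matrix (Fin r) (Fin r) (WittVector p k ⧸ Ideal.span {(p : WittVector p k) ^ (2 * l + n)}))ˣ) :
          Matrix (Fin r) (Fin r) (WittVector p k ⧸ Ideal.span {(p : WittVector p k) ^ (2 * l + n)})) := by
    intro n
    ext i j
    rw [RingHom.mapMatrix_apply, Matrix.map_apply]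
    exact hNred n i j
  have hmulAB : Stmt3Aux.limitMatrix A * Stmt3Aux.limitMatrix B = 1 := by
    apply Matrix.ext
    intro i j
    apply hsep
    intro n
    refine Ideal.Quotient.eq.mp ?_
    have h2 : (Ideal.Quotient.mk (Ideal.span {(p : WittVector p k) ^ (2 * l + n)})).mapMatrix
        (Stmt3Aux.limitMatrix A * Stmt3Aux.limitMatrix B)
        = (Ideal.Quotient.mk (Ideal.span {(p : WittVector p k) ^ (2 * l + n)})).mapMatrix
          (1 : Matrix (Fin r) (Fin r) (WittVector p k)) := by
      rw [map_mul, hmapA n, hmapB n, map_one]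
      exact Units.mul_inv _
    have h3 := congrFun (congrFun (congrArg (fun M => (M : Matrix (Fin r) (Fin r) (WittVector p k ⧸ Ideal.span {(p : WittVector p k) ^ (2 * l + n)}))) h2) i) j
    simpa [RingHom.mapMatrix_apply, Matrix.map_apply] using h3
  have hmulBA : Stmt3Aux.limitMatrix B * Stmt3Aux.limitMatrix A = 1 := by
    apply Matrix.ext
    intro i j
    apply hsep
    intro n
    refine Ideal.Quotient.eq.mp ?_
    have h2 : (Ideal.Quotient.mk (Ideal.span {(p : WittVector p k) ^ (2 * l + n)})).mapMatrix
        (Stmt3Aux.limitMatrix B * Stmt3Aux.limitMatrix A)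
        = (Ideal.Quotient.mk (Ideal.span {(p : WittVector p k) ^ (2 * l + n)})).mapMatrix
          (1 : Matrix (Fin r) (Fin r) (WittVector p k)) := by
      rw [map_mul, hmapA n, hmapB n, map_one]
      exact Units.inv_mul _
    have h3 := congrFun (congrFun (congrArg (fun M => (M : Matrix (Fin r) (Fin r) (WittVector p k ⧸ Ideal.span {(p : WittVector p k) ^ (2 * l + n)}))) h2) i) j
    simpa [RingHom.mapMatrix_apply, Matrix.map_apply] using h3
  refine ⟨⟨Stmt3Aux.limitMatrix A, Stmt3Aux.limitMatrix B, hmulAB, hmulBA⟩, ?_, ?_⟩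
  · -- membership in `H.pts (W(k))`
    obtain ⟨T, hT⟩ := H.closed
    rw [hT]
    intro f hf
    apply hsep
    intro n
    rw [sub_zero]
    refine Ideal.Quotient.eq_zero_iff_mem.mp ?_
    have hcomp : Ideal.Quotient.mkₐ (WittVector p k)
        (Ideal.span {(p : WittVector p k) ^ (2 * l + n)})
        (MvPolynomial.aeval (Sum.elim
          (fun ij : Fin r × Fin r => Stmt3Aux.limitMatrix A ij.1 ij.2)
          (fun ij : Fin r × Fin r => Stmt3Aux.limitMatrix B ij.1 ij.2)) f)
        = MvPolynomial.aeval (fun x => Ideal.Quotient.mkₐ (WittVector p k)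
            (Ideal.span {(p : WittVector p k) ^ (2 * l + n)})
            (Sum.elim
              (fun ij : Fin r × Fin r => Stmt3Aux.limitMatrix A ij.1 ij.2)
              (fun ij : Fin r × Fin r => Stmt3Aux.limitMatrix B ij.1 ij.2) x)) f :=
      MvPolynomial.comp_aeval_apply _ _ f
    have harg : (fun x => Ideal.Quotient.mkₐ (WittVector p k)
        (Ideal.span {(p : WittVector p k) ^ (2 * l + n)})
        (Sum.elim
          (fun ij : Fin r × Fin r => Stmt3Aux.limitMatrix A ij.1 ij.2)
          (fun ij : Fin r × Fin r => Stmt3Aux.limitMatrix B ij.1 ij.2) x))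
        = Sum.elim
          (fun ij : Fin r × Fin r => ((c n).1 : Matrix (Fin r) (Fin r) (WittVector p k ⧸ Ideal.span {(p : WittVector p k) ^ (2 * l + n)})) ij.1 ij.2)
          (fun ij : Fin r × Fin r => (((c n).1⁻¹ : (Matrix (Fin r) (Fin r) (WittVector p k ⧸ Ideal.span {(p : WittVector p k) ^ (2 * l + n)}))ˣ) :
            Matrix (Fin r) (Fin r) (WittVector p k ⧸ Ideal.span {(p : WittVector p k) ^ (2 * l + n)})) ij.1 ij.2) := by
      funext x
      cases x with
      | inl ij => exact hMred n ij.1 ij.2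
      | inr ij => exact hNred n ij.1 ij.2
    show Ideal.Quotient.mkₐ (WittVector p k)
        (Ideal.span {(p : WittVector p k) ^ (2 * l + n)})
        (MvPolynomial.aeval (Sum.elim
          (fun ij : Fin r × Fin r => Stmt3Aux.limitMatrix A ij.1 ij.2)
          (fun ij : Fin r × Fin r => Stmt3Aux.limitMatrix B ij.1 ij.2)) f) = 0
    rw [hcomp, harg]
    exact (hT _ (c n).1).mp (c n).2 f hf
  · -- the explicit congruence `h = 1 + p^l z + p^{2l} w`
    have h00 : ∀ i j : Fin r, Stmt3Aux.limitMatrix A i j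
        - (1 + (p : WittVector p k) ^ l • z) i j
        ∈ Ideal.span {(p : WittVector p k) ^ (2 * l)} := by
      intro i j
      have h1 : Stmt3Aux.limitMatrix A i j - A 0 i j
          ∈ Ideal.span {(p : WittVector p k) ^ (2 * l)} := hlimA 0 i j
      have h2 : A 0 i j - (1 + (p : WittVector p k) ^ l • z) i j
          ∈ Ideal.span {(p : WittVector p k) ^ (2 * l)} := by
        refine Ideal.Quotient.eq.mp ?_
        have h4 : Ideal.Quotient.mk (Ideal.span {(p : WittVector p k) ^ (2 * l)})
            (A 0 i j) = ((c 0).1 : Matrix (Fin r) (Fin r) (WittVector p k ⧸ Ideal.span {(p : WittVector p k) ^ (2 * l + 0)})) i j := hA 0 i j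
        rw [h4]
        exact hc0val i j
      have h5 : (Stmt3Aux.limitMatrix A i j - A 0 i j)
          + (A 0 i j - (1 + (p : WittVector p k) ^ l • z) i j)
          = Stmt3Aux.limitMatrix A i j - (1 + (p : WittVector p k) ^ l • z) i j := by ring
      exact h5 ▸ Ideal.add_mem _ h1 h2
    have hdvd : ∀ i j : Fin r, ∃ wv : WittVector p k,
        Stmt3Aux.limitMatrix A i j = (1 + (p : WittVector p k) ^ l • z) i j
          + (p : WittVector p k) ^ (2 * l) * wv := by
      intro i j
      obtain ⟨d, hd⟩ := Ideal.mem_span_singleton.mp (h00 i j)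
      exact ⟨d, by linear_combination hd⟩
    choose w hw using hdvd
    refine ⟨Matrix.of w, ?_⟩
    apply Matrix.ext
    intro i j
    show Stmt3Aux.limitMatrix A i j
      = (1 + (p : WittVector p k) ^ l • z + (p : WittVector p k) ^ (2 * l) • Matrix.of w) i j
    rw [Matrix.add_apply, Matrix.smul_apply, smul_eq_mul, Matrix.of_apply]
    exact hw i j
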